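/- Let p, M ≥ 1 and let L : ℝ^{M×p} → ℝ be convex and differentiable. Let w_{m,m'} ≥ 0 be symmetric weights and define R(x) = ρ₁‖x‖₁ + ρ₂·Σ_{1≤m<m'≤M} w_{m,m'}‖x^(m) − x^(m')‖₁, where ρ₂ > 0 and ρ₁ = ρ₂/√M. Let θ ∈ ℝ^{M×p} with support S = {(j,m) : θ^(m)_j ≠ 0} of size |S| ≤ d*·M and dissimilarity set S̃ = {(j,m) : θ^(m)_j ≠ θ^(m')_j for some m'} of size |S̃| ≤ r*. Suppose θ̂ ∈ ℝ^{M×p} satisfies L(θ̂) + R(θ̂) ≤ L(θ) + R(θ), set Δ = θ̂ − θ, and assume (i) 2‖∇L(θ)‖_∞ ≤ ρ₁ and (ii) the restricted strong convexity bound L(θ̂) − L(θ) − ⟨∇L(θ), Δ⟩ ≥ η‖Δ‖₂² holds for some η > 0. Then ‖Δ‖₂ ≤ (ρ₂/η)(3√(d*) + 2φ√(r*)), where φ = max_{1≤m≤M} Σ_{m'≠m} w_{m,m'}. -/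

import Mathlib

open Classical in
/-- Deterministic core of Theorem 1 (joint estimation error bound
for multi-experiment networks). Coefficients are indexed by `Fin M × Fin p`,
with `x (m, j)` the `j`-th coefficient of experiment `m`. -/
theorem joint_estimation_error_bound
    (M p dstar rstar : ℕ) (hM : 0 < M)
    (L : EuclideanSpace ℝ (Fin M × Fin p) → ℝ)
    (hconv : ConvexOn ℝ Set.univ L) (hdiff : Differentiable ℝ L)
    (w : Fin M → Fin M → ℝ)
    (hw_nonneg : ∀ m m' : Fin M, m ≠ m' → 0 ≤ w m m')
    (hw_symm : ∀ m m' : Fin M, w m m' = w m' m)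
    (ρ₁ ρ₂ η : ℝ) (hρ₂ : 0 < ρ₂) (hρ₁ : ρ₁ = ρ₂ / Real.sqrt M) (hη : 0 < η)
    (θ θhat : EuclideanSpace ℝ (Fin M × Fin p))
    (hScard : (Finset.univ.filter (fun q : Fin M × Fin p => θ q ≠ 0)).card ≤ dstar * M)
    (hStcard : (Finset.univ.filter
        (fun q : Fin M × Fin p => ∃ m' : Fin M, θ q ≠ θ (m', q.2))).card ≤ rstar)
    (hmin : L θhat + (ρ₁ * (∑ q, |θhat q|)
          + ρ₂ * ∑ m : Fin M, ∑ m' ∈ Finset.univ.filter (fun m' => m < m'),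
              w m m' * (∑ j, |θhat (m, j) - θhat (m', j)|))
        ≤ L θ + (ρ₁ * (∑ q, |θ q|)
          + ρ₂ * ∑ m : Fin M, ∑ m' ∈ Finset.univ.filter (fun m' => m < m'),
              w m m' * (∑ j, |θ (m, j) - θ (m', j)|)))
    (hgrad : ∀ q, 2 * |gradient L θ q| ≤ ρ₁)
    (hRSC : η * ‖θhat - θ‖ ^ 2
        ≤ L θhat - L θ - (inner ℝ (gradient L θ) (θhat - θ) : ℝ)) :
    ‖θhat - θ‖ ≤ (ρ₂ / η) *
      (3 * Real.sqrt dstar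
        + 2 * (Finset.univ.sup' (Finset.univ_nonempty_iff.mpr ⟨⟨0, hM⟩⟩)
            (fun m => ∑ m' ∈ Finset.univ.filter (fun m' => m' ≠ m), w m m'))
          * Real.sqrt rstar) := by
  classical
  classical
  set Δ : EuclideanSpace ℝ (Fin M × Fin p) := θhat - θ with hΔdef
  have hΔ : ∀ q, Δ q = θhat q - θ q := fun q => rfl
  have hnd : (0:ℝ) ≤ ‖Δ‖ := norm_nonneg _
  have hM1 : (1:ℝ) ≤ Real.sqrt M := by
    rw [show (1:ℝ) = Real.sqrt 1 by simp]
    exact Real.sqrt_le_sqrt (by exact_mod_cast hM)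
  have hsM : (0:ℝ) < Real.sqrt M := lt_of_lt_of_le one_pos hM1
  have hρ₁pos : 0 ≤ ρ₁ := by rw [hρ₁]; positivity
  have hnormsq : ‖Δ‖ ^ 2 = ∑ q, (Δ q) ^ 2 := by
    rw [EuclideanSpace.norm_eq, Real.sq_sqrt (by positivity)]
    simp [Real.norm_eq_abs, sq_abs]
  have cs : ∀ T : Finset (Fin M × Fin p),
      (∑ q ∈ T, |Δ q|) ≤ Real.sqrt T.card * ‖Δ‖ := by
    intro T
    have h1 : (∑ q ∈ T, |Δ q|) ^ 2 ≤ (T.card : ℝ) * ∑ q ∈ T, |Δ q| ^ 2 :=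
      sq_sum_le_card_mul_sum_sq
    have h2 : ∑ q ∈ T, |Δ q| ^ 2 ≤ ∑ q, (Δ q) ^ 2 := by
      simp only [sq_abs]
      exact Finset.sum_le_sum_of_subset_of_nonneg (Finset.subset_univ T)
        (fun q _ _ => sq_nonneg _)
    calc (∑ q ∈ T, |Δ q|) = Real.sqrt ((∑ q ∈ T, |Δ q|) ^ 2) := by
          rw [Real.sqrt_sq (Finset.sum_nonneg fun q _ => abs_nonneg _)]
      _ ≤ Real.sqrt ((T.card : ℝ) * ‖Δ‖ ^ 2) := by
          apply Real.sqrt_le_sqrt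
          refine h1.trans ?_
          rw [hnormsq]
          exact mul_le_mul_of_nonneg_left h2 (Nat.cast_nonneg _)
      _ = Real.sqrt T.card * ‖Δ‖ := by
          rw [Real.sqrt_mul (Nat.cast_nonneg _), Real.sqrt_sq hnd]
  -- notation for sets
  set S : Finset (Fin M × Fin p) := Finset.univ.filter (fun q => θ q ≠ 0) with hS
  set St : Finset (Fin M × Fin p) :=
    Finset.univ.filter (fun q : Fin M × Fin p => ∃ m' : Fin M, θ q ≠ θ (m', q.2)) with hSt
  set φ : ℝ := Finset.univ.sup' (Finset.univ_nonempty_iff.mpr ⟨⟨0, hM⟩⟩)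
      (fun m => ∑ m' ∈ Finset.univ.filter (fun m' => m' ≠ m), w m m') with hφ
  have hφ0 : 0 ≤ φ := by
    refine le_trans ?_ (Finset.le_sup' _ (Finset.mem_univ (⟨0, hM⟩ : Fin M)))
    exact Finset.sum_nonneg fun m' hm' => hw_nonneg _ _ (Finset.mem_filter.mp hm').2.symm
  have hφle : ∀ m : Fin M,
      (∑ m' ∈ Finset.univ.filter (fun m' => m' ≠ m), w m m') ≤ φ := by
    intro m
    have := Finset.le_sup' (fun m => ∑ m' ∈ Finset.univ.filter (fun m' => m' ≠ m), w m m')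
      (Finset.mem_univ m)
    exact this
  -- gradient term bound
  have hginner : -(inner ℝ (gradient L θ) Δ : ℝ) ≤ (ρ₁ / 2) * ∑ q, |Δ q| := by
    have : (inner ℝ (gradient L θ) Δ : ℝ) = ∑ q, gradient L θ q * Δ q := by
      simp only [PiLp.inner_apply, Real.inner_apply]
    rw [this, ← Finset.sum_neg_distrib, Finset.mul_sum]
    apply Finset.sum_le_sum
    intro q _
    have h1 : -(gradient L θ q * Δ q) ≤ |gradient L θ q| * |Δ q| := by
      rw [← abs_mul]
      exact neg_le_abs _
    refine h1.trans ?_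
    exact mul_le_mul_of_nonneg_right (by linarith [hgrad q]) (abs_nonneg _)
  -- ℓ1 term bound
  have hsplit : ∀ g : Fin M × Fin p → ℝ,
      (∑ q, g q) = (∑ q ∈ S, g q) + ∑ q ∈ Finset.univ \ S, g q := by
    intro g
    rw [add_comm]
    exact (Finset.sum_sdiff (Finset.filter_subset _ _)).symm
  have hl1 : (∑ q, |θ q|) - (∑ q, |θhat q|)
      ≤ (∑ q ∈ S, |Δ q|) - ∑ q ∈ Finset.univ \ S, |Δ q| := by
    rw [hsplit (fun q => |θ q|), hsplit (fun q => |θhat q|)]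
    have h1 : (∑ q ∈ S, |θ q|) - (∑ q ∈ S, |θhat q|) ≤ ∑ q ∈ S, |Δ q| := by
      rw [← Finset.sum_sub_distrib]
      apply Finset.sum_le_sum
      intro q _
      have h := abs_sub_abs_le_abs_sub (θ q) (θhat q)
      have he : |θ q - θhat q| = |Δ q| := by rw [hΔ q, abs_sub_comm]
      linarith [he ▸ h]
    have h2 : (∑ q ∈ Finset.univ \ S, |θ q|) - (∑ q ∈ Finset.univ \ S, |θhat q|)
        = - ∑ q ∈ Finset.univ \ S, |Δ q| := by
      rw [← Finset.sum_neg_distrib, ← Finset.sum_sub_distrib]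
      apply Finset.sum_congr rfl
      intro q hq
      have hq0 : θ q = 0 := by
        have h := (Finset.mem_sdiff.mp hq).2
        by_contra hne
        exact h (Finset.mem_filter.mpr ⟨Finset.mem_univ q, hne⟩)
      rw [hΔ q, hq0]
      simp
    linarith
  -- fusion term bound
  set f : Fin M → Fin p → ℝ := fun m j =>
    if (∃ m'' : Fin M, θ (m, j) ≠ θ (m'', j)) then |Δ (m, j)| else 0 with hf
  have hf0 : ∀ m j, 0 ≤ f m j := by
    intro m j
    by_cases h : ∃ m'' : Fin M, θ (m, j) ≠ θ (m'', j) <;> simp [hf, h, abs_nonneg]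
  set t : Fin M → ℝ := fun m => ∑ j, f m j with ht
  have ht0 : ∀ m, 0 ≤ t m := fun m => Finset.sum_nonneg fun j _ => hf0 m j
  have hptwise : ∀ (m m' : Fin M) (j : Fin p),
      |θ (m, j) - θ (m', j)| - |θhat (m, j) - θhat (m', j)| ≤ f m j + f m' j := by
    intro m m' j
    by_cases hc : θ (m, j) = θ (m', j)
    · have h0 := hf0 m j
      have h0' := hf0 m' j
      have h0'' := abs_nonneg (θhat (m, j) - θhat (m', j))
      rw [hc]
      simp only [sub_self, abs_zero, zero_sub]
      linarith
    · have hex : ∃ m'' : Fin M, θ (m, j) ≠ θ (m'', j) := ⟨m', hc⟩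
      have hex' : ∃ m'' : Fin M, θ (m', j) ≠ θ (m'', j) := ⟨m, fun h => hc h.symm⟩
      have hfm : f m j = |Δ (m, j)| := by simp only [hf]; rw [if_pos hex]
      have hfm' : f m' j = |Δ (m', j)| := by simp only [hf]; rw [if_pos hex']
      rw [hfm, hfm']
      have h1 := abs_sub_abs_le_abs_sub (θ (m, j) - θ (m', j)) (θhat (m, j) - θhat (m', j))
      have h2 : θ (m, j) - θ (m', j) - (θhat (m, j) - θhat (m', j))
          = Δ (m', j) - Δ (m, j) := by
        rw [hΔ (m', j), hΔ (m, j)]; ring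
      rw [h2] at h1
      have h3 := abs_sub (Δ (m', j)) (Δ (m, j))
      linarith
  have hfus : (∑ m : Fin M, ∑ m' ∈ Finset.univ.filter (fun m' => m < m'),
        w m m' * (∑ j, |θ (m, j) - θ (m', j)|))
      - (∑ m : Fin M, ∑ m' ∈ Finset.univ.filter (fun m' => m < m'),
        w m m' * (∑ j, |θhat (m, j) - θhat (m', j)|))
      ≤ φ * ∑ q ∈ St, |Δ q| := by
    have step1 : (∑ m : Fin M, ∑ m' ∈ Finset.univ.filter (fun m' => m < m'),
          w m m' * (∑ j, |θ (m, j) - θ (m', j)|))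
        - (∑ m : Fin M, ∑ m' ∈ Finset.univ.filter (fun m' => m < m'),
          w m m' * (∑ j, |θhat (m, j) - θhat (m', j)|))
        ≤ ∑ m : Fin M, ∑ m' ∈ Finset.univ.filter (fun m' => m < m'),
          w m m' * (t m + t m') := by
      rw [← Finset.sum_sub_distrib]
      apply Finset.sum_le_sum
      intro m _
      rw [← Finset.sum_sub_distrib]
      apply Finset.sum_le_sum
      intro m' hm'
      have hmm' : m ≠ m' := ne_of_lt (Finset.mem_filter.mp hm').2
      have hw := hw_nonneg m m' hmm'
      rw [← mul_sub]
      refine mul_le_mul_of_nonneg_left ?_ hw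
      have htt : t m + t m' = ∑ j, (f m j + f m' j) := by
        rw [Finset.sum_add_distrib]
      rw [htt, ← Finset.sum_sub_distrib]
      exact Finset.sum_le_sum fun j _ => hptwise m m' j
    have step2 : (∑ m : Fin M, ∑ m' ∈ Finset.univ.filter (fun m' => m < m'),
          w m m' * (t m + t m')) ≤ φ * ∑ m, t m := by
      have e1 : (∑ m : Fin M, ∑ m' ∈ Finset.univ.filter (fun m' => m < m'),
            w m m' * (t m + t m'))
          = ∑ m : Fin M, ∑ m' : Fin M,
              ((if m < m' then w m m' * t m else 0) + (if m < m' then w m m' * t m' else 0)) := by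
        apply Finset.sum_congr rfl
        intro m _
        rw [Finset.sum_filter]
        apply Finset.sum_congr rfl
        intro m' _
        by_cases h : m < m' <;> simp [h] <;> ring
      rw [e1]
      simp only [Finset.sum_add_distrib]
      have e2 : (∑ m : Fin M, ∑ m' : Fin M, if m < m' then w m m' * t m' else 0)
          = ∑ m : Fin M, ∑ m' : Fin M, if m' < m then w m' m * t m else 0 := by
        rw [Finset.sum_comm]
      rw [e2, ← Finset.sum_add_distrib]
      have e3 : ∀ m : Fin M,
          ((∑ m' : Fin M, if m < m' then w m m' * t m else 0)
            + ∑ m' : Fin M, if m' < m then w m' m * t m else 0)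
          = (∑ m' ∈ Finset.univ.filter (fun m' => m' ≠ m), w m m') * t m := by
        intro m
        rw [Finset.sum_filter, Finset.sum_mul, ← Finset.sum_add_distrib]
        apply Finset.sum_congr rfl
        intro m' _
        rcases lt_trichotomy m m' with h | h | h
        · rw [if_pos h, if_neg (asymm h), if_pos (ne_of_gt h)]
          ring
        · rw [if_neg (by simp [h]), if_neg (by simp [h]), if_neg (by simp [h])]
          ring
        · rw [if_neg (asymm h), if_pos h, if_pos (ne_of_lt h), hw_symm m' m]
          ring
      rw [Finset.sum_congr rfl fun m _ => e3 m, Finset.mul_sum]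
      apply Finset.sum_le_sum
      intro m _
      exact mul_le_mul_of_nonneg_right (hφle m) (ht0 m)
    have step3 : (∑ m, t m) = ∑ q ∈ St, |Δ q| := by
      rw [hSt, Finset.sum_filter, Fintype.sum_prod_type]
    calc _ ≤ ∑ m : Fin M, ∑ m' ∈ Finset.univ.filter (fun m' => m < m'),
          w m m' * (t m + t m') := step1
      _ ≤ φ * ∑ m, t m := step2
      _ = φ * ∑ q ∈ St, |Δ q| := by rw [step3]
  -- assemble
  have hRdiff : L θhat - L θ ≤ ρ₁ * ((∑ q, |θ q|) - ∑ q, |θhat q|)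
      + ρ₂ * ((∑ m : Fin M, ∑ m' ∈ Finset.univ.filter (fun m' => m < m'),
          w m m' * (∑ j, |θ (m, j) - θ (m', j)|))
        - ∑ m : Fin M, ∑ m' ∈ Finset.univ.filter (fun m' => m < m'),
          w m m' * (∑ j, |θhat (m, j) - θhat (m', j)|)) := by
    rw [mul_sub, mul_sub]
    linarith [hmin]
  have hsum_split : (∑ q, |Δ q|) = (∑ q ∈ S, |Δ q|) + ∑ q ∈ Finset.univ \ S, |Δ q| :=
    hsplit (fun q => |Δ q|)
  have hsdiff_nonneg : 0 ≤ ∑ q ∈ Finset.univ \ S, |Δ q| :=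
    Finset.sum_nonneg fun q _ => abs_nonneg _
  have hkey : η * ‖Δ‖ ^ 2 ≤ (3 / 2 * ρ₁) * (∑ q ∈ S, |Δ q|) + ρ₂ * φ * ∑ q ∈ St, |Δ q| := by
    have h1 : η * ‖Δ‖ ^ 2 ≤ L θhat - L θ + -(inner ℝ (gradient L θ) Δ : ℝ) := by
      linarith [hRSC]
    have h5 : ρ₂ * ((∑ m : Fin M, ∑ m' ∈ Finset.univ.filter (fun m' => m < m'),
          w m m' * (∑ j, |θ (m, j) - θ (m', j)|))
        - ∑ m : Fin M, ∑ m' ∈ Finset.univ.filter (fun m' => m < m'),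
          w m m' * (∑ j, |θhat (m, j) - θhat (m', j)|))
        ≤ ρ₂ * (φ * ∑ q ∈ St, |Δ q|) :=
      mul_le_mul_of_nonneg_left hfus (le_of_lt hρ₂)
    have h6 : ρ₁ * ((∑ q, |θ q|) - ∑ q, |θhat q|)
        ≤ ρ₁ * ((∑ q ∈ S, |Δ q|) - ∑ q ∈ Finset.univ \ S, |Δ q|) :=
      mul_le_mul_of_nonneg_left hl1 hρ₁pos
    nlinarith [hRdiff, hsum_split, hginner, mul_nonneg hρ₁pos hsdiff_nonneg]
  have hcardS : Real.sqrt S.card ≤ Real.sqrt dstar * Real.sqrt M := by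
    rw [← Real.sqrt_mul (Nat.cast_nonneg _)]
    apply Real.sqrt_le_sqrt
    rw [← Nat.cast_mul]
    exact_mod_cast hScard
  have hcardSt : Real.sqrt St.card ≤ Real.sqrt rstar := by
    apply Real.sqrt_le_sqrt
    exact_mod_cast hStcard
  have hS1 : (∑ q ∈ S, |Δ q|) ≤ Real.sqrt dstar * Real.sqrt M * ‖Δ‖ :=
    (cs S).trans (mul_le_mul_of_nonneg_right hcardS hnd)
  have hSt1 : (∑ q ∈ St, |Δ q|) ≤ Real.sqrt rstar * ‖Δ‖ :=
    (cs St).trans (mul_le_mul_of_nonneg_right hcardSt hnd)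
  have hcoef : (3 / 2 * ρ₁) * (Real.sqrt dstar * Real.sqrt M * ‖Δ‖)
      = ρ₂ * (3 / 2 * Real.sqrt dstar) * ‖Δ‖ := by
    rw [hρ₁]
    field_simp
  have hd : (0:ℝ) ≤ Real.sqrt dstar := Real.sqrt_nonneg _
  have hr : (0:ℝ) ≤ Real.sqrt rstar := Real.sqrt_nonneg _
  have hkey2 : η * ‖Δ‖ ^ 2 ≤ ρ₂ * (3 * Real.sqrt dstar + 2 * φ * Real.sqrt rstar) * ‖Δ‖ := by
    have hc1 : (3 / 2 * ρ₁) * (∑ q ∈ S, |Δ q|) ≤ ρ₂ * (3 / 2 * Real.sqrt dstar) * ‖Δ‖ := by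
      rw [← hcoef]
      exact mul_le_mul_of_nonneg_left hS1 (by positivity)
    have hc2 : ρ₂ * φ * (∑ q ∈ St, |Δ q|) ≤ ρ₂ * φ * (Real.sqrt rstar * ‖Δ‖) :=
      mul_le_mul_of_nonneg_left hSt1 (mul_nonneg hρ₂.le hφ0)
    have hexp : ρ₂ * (3 * Real.sqrt dstar + 2 * φ * Real.sqrt rstar) * ‖Δ‖
        = ρ₂ * (3 / 2 * Real.sqrt dstar) * ‖Δ‖ + ρ₂ * φ * (Real.sqrt rstar * ‖Δ‖)
          + (ρ₂ * (3 / 2 * Real.sqrt dstar) * ‖Δ‖ + ρ₂ * φ * (Real.sqrt rstar * ‖Δ‖)) := by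
      ring
    have hnn1 : 0 ≤ ρ₂ * (3 / 2 * Real.sqrt dstar) * ‖Δ‖ := by positivity
    have hnn2 : 0 ≤ ρ₂ * φ * (Real.sqrt rstar * ‖Δ‖) :=
      mul_nonneg (mul_nonneg hρ₂.le hφ0) (mul_nonneg hr hnd)
    linarith [hkey]
  have hfinal : ‖Δ‖ ≤ (ρ₂ / η) * (3 * Real.sqrt dstar + 2 * φ * Real.sqrt rstar) := by
    rcases eq_or_lt_of_le hnd with h0 | h0
    · rw [← h0]
      have : 0 ≤ 3 * Real.sqrt dstar + 2 * φ * Real.sqrt rstar := by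
        have := mul_nonneg (mul_nonneg (by norm_num : (0:ℝ) ≤ 2) hφ0) hr
        linarith
      exact mul_nonneg (div_nonneg hρ₂.le hη.le) this
    · have h' : (η * ‖Δ‖) * ‖Δ‖ ≤ (ρ₂ * (3 * Real.sqrt dstar + 2 * φ * Real.sqrt rstar)) * ‖Δ‖ := by
        rw [mul_assoc, ← sq]
        exact hkey2
      have h'' := le_of_mul_le_mul_right h' h0
      rw [div_mul_eq_mul_div, le_div_iff₀ hη]
      linarith
  exact hfinal
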